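/- Assume m_{-2} := ∫_{[0,1]} x^{-2} Λ(dx) < ∞. Then there exists a constant C > 0 such that -log p_{m,m-1} ≤ C·m for all integers m ≥ 2, where p_{m,m-1} = (∫_{[0,1]} x^{m-2} Λ(dx))/λ_m is the probability that the first collision starting from m blocks merges all m blocks. -/

import Mathlib

open MeasureTheory Filter Topology BoundedContinuousFunction
open scoped ENNReal NNReal

noncomputable section

/-- Collision rate `λ_{m,k} = ∫_{[0,1]} x^{k-2} (1-x)^{m-k} Λ(dx)`. -/
def lamColl (Λ : Measure ℝ) (m k : ℕ) : ℝ :=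
  ∫ x in Set.Icc (0:ℝ) 1, x ^ (k - 2) * (1 - x) ^ (m - k) ∂Λ

/-- Total collision rate `λ_m = Σ_{k=2}^m C(m,k) λ_{m,k}`. -/
def lamTot (Λ : Measure ℝ) (m : ℕ) : ℝ :=
  ∑ k ∈ Finset.Icc 2 m, (m.choose k : ℝ) * lamColl Λ m k

/-- `p_{m,k} = C(m,k+1) λ_{m,k+1} / λ_m`. -/
def pColl (Λ : Measure ℝ) (m k : ℕ) : ℝ :=
  (m.choose (k + 1) : ℝ) * lamColl Λ m (k + 1) / lamTot Λ m

/-- Adding to a spectrum the record of one collision of `j+1` blocks. -/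
def addColl (j : ℕ) (x : ℕ → ℝ) : ℕ → ℝ := fun k => (if k = j + 1 then 1 else 0) + x k

/-- `μ n` is the law of the collision spectrum `(X_{n,k})_{k ≥ 2}` of the `Λ`-coalescent
started from `n` blocks, viewed as a (probability) measure on `ℕ → ℝ` whose coordinate `k`
carries `X_{n,k}`; it is characterised by the distributional recursion obtained by
decomposing at the first collision. -/
def IsCollisionSpectrum (Λ : Measure ℝ) (μ : ℕ → Measure (ℕ → ℝ)) : Prop :=
  (∀ n, IsProbabilityMeasure (μ n)) ∧
  μ 1 = Measure.dirac (fun _ => (0:ℝ)) ∧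
  ∀ n, 2 ≤ n → μ n = ∑ j ∈ Finset.Icc 1 (n - 1),
      ENNReal.ofReal (pColl Λ n j) • (μ (n - j)).map (addColl j)

/-- `m_{-2} = ∫_{[0,1]} x^{-2} Λ(dx)`. -/
def mm2 (Λ : Measure ℝ) : ℝ≥0∞ :=
  ∫⁻ x in Set.Icc (0:ℝ) 1, ENNReal.ofReal (x⁻¹ ^ 2) ∂Λ

/-- The law of `1 - W`, i.e. the probability measure `m_{-2}^{-1} y^{-2} Λ(dy)` on `[0,1]`. -/
def lawY (Λ : Measure ℝ) : Measure ℝ :=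
  (mm2 Λ)⁻¹ • (Λ.restrict (Set.Icc 0 1)).withDensity fun y => ENNReal.ofReal (y⁻¹ ^ 2)

/-- The law of `W`: the pushforward of `lawY Λ` under `y ↦ 1 - y`, so that
`P{W ≤ x} = m_{-2}^{-1} ∫_{[1-x,1]} y^{-2} Λ(dy)`. -/
def lawW (Λ : Measure ℝ) : Measure ℝ := (lawY Λ).map fun y => 1 - y

/-- **(From the proof of Theorem 1.1)**: assume `m_{-2} < ∞`. Then there is a constant
`C > 0` with `-log p_{m,m-1} ≤ C·m` for all `m ≥ 2`, where `p_{m,m-1}` is the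
probability that the first collision starting from `m` blocks merges all `m` blocks. -/
theorem neg_log_p_total_merger_le_linear
    (Λ : Measure ℝ) [IsFiniteMeasure Λ] (hΛne : Λ ≠ 0)
    (hΛsupp : Λ (Set.Icc (0:ℝ) 1)ᶜ = 0) (hΛ0 : Λ {0} = 0) (hΛ1 : Λ {1} = 0)
    (hm2 : mm2 Λ < ∞) :
    ∃ C : ℝ, 0 < C ∧ ∀ m : ℕ, 2 ≤ m → -Real.log (pColl Λ m (m - 1)) ≤ C * m := by
  
  -- find ε ∈ (0, 1/2] with Λ(Icc ε 1) ≠ 0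
  obtain ⟨n, hn⟩ : ∃ n : ℕ, Λ (Set.Icc ((n:ℝ)+2)⁻¹ 1) ≠ 0 := by
    by_contra h
    push_neg at h
    have hIoo : Λ (Set.Ioo (0:ℝ) 1) = 0 := by
      refine measure_mono_null (fun x hx => ?_) (measure_iUnion_null h)
      obtain ⟨n, hnx⟩ := exists_nat_gt x⁻¹
      refine Set.mem_iUnion.2 ⟨n, ⟨?_, hx.2.le⟩⟩
      rw [inv_le_comm₀ (by positivity) hx.1]
      calc x⁻¹ ≤ (n:ℝ) := hnx.le
        _ ≤ (n:ℝ) + 2 := by linarith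
    have huniv : Λ Set.univ = 0 := by
      have h1 : Λ (Set.Icc (0:ℝ) 1) = 0 := by
        refine measure_mono_null (fun x hx => ?_)
          (measure_union_null hΛ0 (measure_union_null hΛ1 hIoo))
        rcases eq_or_lt_of_le hx.1 with h | h
        · exact Or.inl h.symm
        rcases eq_or_lt_of_le hx.2 with h' | h'
        · exact Or.inr (Or.inl h')
        · exact Or.inr (Or.inr ⟨h, h'⟩)
      have := measure_union_le (μ := Λ) (Set.Icc (0:ℝ) 1) (Set.Icc (0:ℝ) 1)ᶜ
      rw [Set.union_compl_self, h1, hΛsupp] at this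
      simpa using this
    exact hΛne (Measure.measure_univ_eq_zero.mp huniv)
  set ε : ℝ := ((n:ℝ)+2)⁻¹ with hεdef
  have hε0 : 0 < ε := by positivity
  have hε1 : ε ≤ 1/2 := by
    rw [hεdef, show (1:ℝ)/2 = (2:ℝ)⁻¹ by norm_num]
    exact inv_anti₀ (by norm_num) (le_add_of_nonneg_left (Nat.cast_nonneg n))
  set c : ℝ := (Λ (Set.Icc ε 1)).toReal with hcdef
  set L : ℝ := (Λ (Set.Icc (0:ℝ) 1)).toReal with hLdef
  have hfin : ∀ s : Set ℝ, Λ s ≠ ⊤ := fun s => (measure_lt_top Λ s).ne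
  have hc : 0 < c := ENNReal.toReal_pos hn (hfin _)
  have hcL : c ≤ L :=
    ENNReal.toReal_mono (hfin _) (measure_mono (Set.Icc_subset_Icc hε0.le le_rfl))
  have hL : 0 < L := lt_of_lt_of_le hc hcL
  -- integrability
  have hcont : ∀ m k : ℕ, Continuous fun x : ℝ => x ^ (k-2) * (1-x) ^ (m-k) :=
    fun m k => (continuous_pow _).mul ((continuous_const.sub continuous_id).pow _)
  have hint : ∀ m k : ℕ, IntegrableOn (fun x : ℝ => x ^ (k-2) * (1-x) ^ (m-k))
      (Set.Icc 0 1) Λ := fun m k => (hcont m k).continuousOn.integrableOn_compact isCompact_Icc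
  have hnonneg : ∀ m k : ℕ, 0 ≤ lamColl Λ m k := by
    intro m k
    refine setIntegral_nonneg measurableSet_Icc (fun x hx => ?_)
    exact mul_nonneg (pow_nonneg hx.1 _) (pow_nonneg (by linarith [hx.2]) _)
  have hCollLe : ∀ m k : ℕ, lamColl Λ m k ≤ L := by
    intro m k
    have : lamColl Λ m k ≤ ∫ _x in Set.Icc (0:ℝ) 1, (1:ℝ) ∂Λ := by
      refine setIntegral_mono_on (hint m k) (integrableOn_const (hfin _))
        measurableSet_Icc (fun x hx => ?_)
      calc x ^ (k-2) * (1-x) ^ (m-k) ≤ 1 ^ (k-2) * 1 ^ (m-k) :=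
            mul_le_mul (pow_le_pow_left₀ hx.1 hx.2 _)
              (pow_le_pow_left₀ (by linarith [hx.2]) (by linarith [hx.1]) _)
              (pow_nonneg (by linarith [hx.2]) _) (by positivity)
        _ = 1 := by simp
    simpa [hLdef, measureReal_def] using this
  -- numerator lower bound
  have hNum : ∀ m : ℕ, 2 ≤ m → ε ^ (m-2) * c ≤ lamColl Λ m m := by
    intro m hm
    have h1 : ε ^ (m-2) * c = ∫ _x in Set.Icc ε 1, ε ^ (m-2) ∂Λ := by
      rw [setIntegral_const]; simp [hcdef, mul_comm, measureReal_def]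
    have hsub : Set.Icc ε 1 ⊆ Set.Icc (0:ℝ) 1 := Set.Icc_subset_Icc hε0.le le_rfl
    have h2 : ∫ _x in Set.Icc ε 1, ε ^ (m-2) ∂Λ
        ≤ ∫ x in Set.Icc ε 1, x ^ (m-2) ∂Λ := by
      refine setIntegral_mono_on (integrableOn_const (hfin _))
        ?_ measurableSet_Icc (fun x hx => pow_le_pow_left₀ hε0.le hx.1 _)
      exact ((continuous_pow (m-2)).continuousOn.integrableOn_compact isCompact_Icc)
    have h3 : ∫ x in Set.Icc ε 1, x ^ (m-2) ∂Λ ≤ ∫ x in Set.Icc (0:ℝ) 1, x ^ (m-2) ∂Λ := by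
      refine setIntegral_mono_set
        ((continuous_pow (m-2)).continuousOn.integrableOn_compact isCompact_Icc)
        ?_ (HasSubset.Subset.eventuallyLE hsub)
      filter_upwards [ae_restrict_mem measurableSet_Icc] with x hx
      exact pow_nonneg hx.1 _
    have h4 : lamColl Λ m m = ∫ x in Set.Icc (0:ℝ) 1, x ^ (m-2) ∂Λ := by
      simp [lamColl]
    linarith
  -- lamTot bounds
  have hTotLe : ∀ m : ℕ, lamTot Λ m ≤ 2^m * L := by
    intro m
    have h1 : lamTot Λ m ≤ ∑ k ∈ Finset.Icc 2 m, (m.choose k : ℝ) * L := by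
      refine Finset.sum_le_sum (fun k _ => ?_)
      exact mul_le_mul_of_nonneg_left (hCollLe m k) (by positivity)
    have h2 : ∑ k ∈ Finset.Icc 2 m, (m.choose k : ℝ) ≤ 2^m := by
      have : ∑ k ∈ Finset.Icc 2 m, m.choose k ≤ ∑ k ∈ Finset.range (m+1), m.choose k :=
        Finset.sum_le_sum_of_subset (fun k hk => by
          simp only [Finset.mem_Icc] at hk
          simp [Finset.mem_range]; omega)
      rw [Nat.sum_range_choose] at this
      calc ∑ k ∈ Finset.Icc 2 m, (m.choose k : ℝ)
          = ((∑ k ∈ Finset.Icc 2 m, m.choose k : ℕ) : ℝ) := by push_cast; ring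
        _ ≤ ((2^m : ℕ) : ℝ) := by exact_mod_cast this
        _ = 2^m := by push_cast; ring
    calc lamTot Λ m ≤ (∑ k ∈ Finset.Icc 2 m, (m.choose k : ℝ)) * L := by
          rw [Finset.sum_mul]; exact h1
      _ ≤ 2^m * L := mul_le_mul_of_nonneg_right h2 hL.le
  have hTotGe : ∀ m : ℕ, 2 ≤ m → lamColl Λ m m ≤ lamTot Λ m := by
    intro m hm
    have := Finset.single_le_sum (f := fun k => (m.choose k : ℝ) * lamColl Λ m k)
      (fun k _ => mul_nonneg (by positivity) (hnonneg m k))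
      (Finset.mem_Icc.2 ⟨hm, le_rfl⟩)
    simpa [lamTot, Nat.choose_self] using this
  -- main bound
  refine ⟨Real.log 2 - Real.log ε + (Real.log L - Real.log c)/2, ?_, ?_⟩
  · have h2 : (0:ℝ) < Real.log 2 := Real.log_pos (by norm_num)
    have hεlog : Real.log ε ≤ 0 := Real.log_nonpos hε0.le (by linarith)
    have hlc : Real.log c ≤ Real.log L := Real.log_le_log hc hcL
    linarith
  · intro m hm
    have hmR : (2:ℝ) ≤ (m:ℝ) := by exact_mod_cast hm
    have hN := hNum m hm
    have hNpos : 0 < lamColl Λ m m := lt_of_lt_of_le (by positivity) hN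
    have hTpos : 0 < lamTot Λ m := lt_of_lt_of_le hNpos (hTotGe m hm)
    have hp : pColl Λ m (m-1) = lamColl Λ m m / lamTot Λ m := by
      have h1 : m - 1 + 1 = m := Nat.sub_add_cancel (le_trans (by norm_num) hm)
      simp [pColl, h1, Nat.choose_self]
    rw [hp, Real.log_div hNpos.ne' hTpos.ne', neg_sub]
    have hT : Real.log (lamTot Λ m) ≤ (m:ℝ) * Real.log 2 + Real.log L := by
      calc Real.log (lamTot Λ m) ≤ Real.log (2^m * L) := Real.log_le_log hTpos (hTotLe m)
        _ = (m:ℝ) * Real.log 2 + Real.log L := by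
            rw [Real.log_mul (by positivity) hL.ne', Real.log_pow]
    have hNlog : ((m:ℝ)-2) * Real.log ε + Real.log c ≤ Real.log (lamColl Λ m m) := by
      have h := Real.log_le_log (mul_pos (pow_pos hε0 _) hc) hN
      rw [Real.log_mul (by positivity) hc.ne', Real.log_pow] at h
      have hcast : ((m-2:ℕ):ℝ) = (m:ℝ)-2 := by rw [Nat.cast_sub hm]; norm_num
      rwa [hcast] at h
    have hεlog : Real.log ε ≤ 0 := Real.log_nonpos hε0.le (by linarith)
    have hlc : Real.log c ≤ Real.log L := Real.log_le_log hc hcL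
    nlinarith [mul_nonneg (by linarith : (0:ℝ) ≤ (m:ℝ)-2) (by linarith : 0 ≤ -Real.log ε),
      mul_nonneg (by linarith : (0:ℝ) ≤ (m:ℝ)-2) (by linarith : 0 ≤ Real.log L - Real.log c)]
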